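/- For every triangle-free graph G and every vertex v, ν(G_v) ≤ ν(G) − 3·d²(v) + 17·d(v) − 18 − N(C_4; G, N(v)), where ν(H) = 3e(H) − 17n(H) + 35α(H) + N(C_4; H). -/

import Mathlib

open SimpleGraph

/-- The independence number of a graph. -/
noncomputable def indepNum {V : Type} (G : SimpleGraph V) : ℕ :=
  sSup {n : ℕ | ∃ s : Set V, s.Finite ∧ s.ncard = n ∧ ∀ a ∈ s, ∀ b ∈ s, ¬ G.Adj a b}

/-- The number of edges of a graph. -/
noncomputable def numEdges {V : Type} (G : SimpleGraph V) : ℕ := G.edgeSet.ncard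

/-- The degree (valency) of a vertex. -/
noncomputable def deg {V : Type} (G : SimpleGraph V) (v : V) : ℕ := (G.neighborSet v).ncard

/-- The second valency `d²(v) = ∑_{w ∈ N(v)} d(w)`. -/
noncomputable def secondDeg {V : Type} (G : SimpleGraph V) (v : V) : ℕ :=
  ∑ᶠ w ∈ G.neighborSet v, deg G w

/-- `p = (a,b,c,d)` is an (ordered) 4-cycle of `G`. -/
def IsC4 {V : Type} (G : SimpleGraph V) (p : V × V × V × V) : Prop :=
  G.Adj p.1 p.2.1 ∧ G.Adj p.2.1 p.2.2.1 ∧ G.Adj p.2.2.1 p.2.2.2 ∧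
    G.Adj p.2.2.2 p.1 ∧ p.1 ≠ p.2.2.1 ∧ p.2.1 ≠ p.2.2.2

/-- The number of 4-cycles of `G`; each 4-cycle yields 8 ordered tuples. -/
noncomputable def numC4 {V : Type} (G : SimpleGraph V) : ℕ :=
  {p : V × V × V × V | IsC4 G p}.ncard / 8

/-- The number of 4-cycles of `G` containing a vertex of `S`. -/
noncomputable def numC4Through {V : Type} (G : SimpleGraph V) (S : Set V) : ℕ :=
  {p : V × V × V × V | IsC4 G p ∧ (p.1 ∈ S ∨ p.2.1 ∈ S ∨ p.2.2.1 ∈ S ∨ p.2.2.2 ∈ S)}.ncard / 8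

/-- The invariant `ν(G) = 3e(G) − 17n(G) + 35α(G) + N(C₄;G)`. -/
noncomputable def nu {V : Type} (G : SimpleGraph V) : ℤ :=
  3 * (numEdges G : ℤ) - 17 * (Nat.card V : ℤ) + 35 * (_root_.indepNum G : ℤ) + (numC4 G : ℤ)

/-- The closed neighbourhood `N[v]`. -/
def closedNbhd {V : Type} (G : SimpleGraph V) (v : V) : Set V := insert v (G.neighborSet v)

/-- `S` destabilises `G` : removing `S` decreases the independence number. -/
def Destab {V : Type} (G : SimpleGraph V) (S : Set V) : Prop :=
  _root_.indepNum (G.induce Sᶜ) < _root_.indepNum G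

/-- `G` is edge-critical (α-critical): removing any edge increases the independence number. -/
def EdgeCritical {V : Type} (G : SimpleGraph V) : Prop :=
  ∀ e ∈ G.edgeSet, _root_.indepNum G < _root_.indepNum (G.deleteEdges {e})

section Aux

variable {V : Type} [Fintype V]

lemma indep_bddAbove (G : SimpleGraph V) :
    BddAbove {n : ℕ | ∃ s : Set V, s.Finite ∧ s.ncard = n ∧ ∀ a ∈ s, ∀ b ∈ s, ¬ G.Adj a b} := by
  refine ⟨Nat.card V, ?_⟩
  rintro n ⟨s, hf, rfl, -⟩
  have := Set.ncard_le_ncard (Set.subset_univ s) Set.finite_univ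
  simpa [Set.ncard_univ] using this

lemma indep_mem (G : SimpleGraph V) :
    ∃ s : Set V, s.Finite ∧ s.ncard = _root_.indepNum G ∧ ∀ a ∈ s, ∀ b ∈ s, ¬ G.Adj a b := by
  have h := Nat.sSup_mem (s :=
      {n : ℕ | ∃ s : Set V, s.Finite ∧ s.ncard = n ∧ ∀ a ∈ s, ∀ b ∈ s, ¬ G.Adj a b})
      ⟨0, ∅, Set.finite_empty, by simp, by simp⟩ (indep_bddAbove G)
  exact h

/-- two sets injecting disjointly into a third -/
lemma ncard_add_le {α β γ : Type} [Finite γ] {A : Set α} {B : Set β} {C : Set γ}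
    (f : α → γ) (g : β → γ) (hf : Set.InjOn f A) (hg : Set.InjOn g B)
    (hfC : f '' A ⊆ C) (hgC : g '' B ⊆ C) (hdisj : Disjoint (f '' A) (g '' B)) :
    A.ncard + B.ncard ≤ C.ncard := by
  have h1 : A.ncard = (f '' A).ncard := (Set.ncard_image_of_injOn hf).symm
  have h2 : B.ncard = (g '' B).ncard := (Set.ncard_image_of_injOn hg).symm
  rw [h1, h2, ← Set.ncard_union_eq hdisj (Set.toFinite _) (Set.toFinite _)]
  exact Set.ncard_le_ncard (Set.union_subset hfC hgC) (Set.toFinite _)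

lemma nat_div_add_div_le (a b : ℕ) : a / 8 + b / 8 ≤ (a + b) / 8 := by
  rw [Nat.le_div_iff_mul_le (by norm_num)]
  have := Nat.div_mul_le_self a 8
  have := Nat.div_mul_le_self b 8
  omega

end Aux

/-- For a triangle-free graph `G` and any vertex `v`,
`ν(G_v) ≤ ν(G) − 3d²(v) + 17d(v) − 18 − N(C₄; G, N(v))`. -/
theorem stmt10 {V : Type} [Fintype V] (G : SimpleGraph V) (h3 : G.CliqueFree 3) (v : V) :
    nu (G.induce (closedNbhd G v)ᶜ) ≤
      nu G - 3 * (secondDeg G v : ℤ) + 17 * (deg G v : ℤ) - 18 -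
        (numC4Through G (G.neighborSet v) : ℤ) := by

  classical
  set W : Set V := (closedNbhd G v)ᶜ with hW
  have hvW : v ∉ W := by simp [hW, closedNbhd]
  have hNW : ∀ x ∈ G.neighborSet v, x ∉ W := by
    intro x hx hxW
    exact hxW (Set.mem_insert_of_mem _ hx)
  have hWN : ∀ x ∈ W, x ∉ G.neighborSet v := fun x hx h => hNW x h hx
  -- vertex count
  have hn : Nat.card ↥W + (deg G v + 1) = Nat.card V := by
    have h1 : Nat.card ↥W = W.ncard := Nat.card_coe_set_eq W
    have h2 : W.ncard + Wᶜ.ncard = Nat.card V :=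
      Set.ncard_add_ncard_compl W (Set.toFinite _) (Set.toFinite _)
    have h3' : Wᶜ = closedNbhd G v := compl_compl _
    have h4 : (closedNbhd G v).ncard = deg G v + 1 := by
      rw [closedNbhd, Set.ncard_insert_of_notMem (G.notMem_neighborSet_self)
        (Set.toFinite _), deg]
    rw [h3', h4] at h2
    omega
  clear_value W
  -- independence number
  have hα : _root_.indepNum (G.induce W) + 1 ≤ _root_.indepNum G := by
    have hspec := indep_mem (G.induce W)
    obtain ⟨s, hsf, hcard, hind⟩ := hspec
    have hvim : v ∉ Subtype.val '' s := by
      rintro ⟨⟨x, hxW⟩, -, rfl⟩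
      exact hvW hxW
    have hcard' : (insert v (Subtype.val '' s)).ncard = _root_.indepNum (G.induce W) + 1 := by
      rw [Set.ncard_insert_of_notMem hvim (Set.toFinite _),
        Set.ncard_image_of_injective _ Subtype.val_injective, hcard]
    have hind' : ∀ a ∈ insert v (Subtype.val '' s), ∀ b ∈ insert v (Subtype.val '' s),
        ¬ G.Adj a b := by
      rintro a ha b hb hab
      rcases ha with rfl | ⟨x, hx, rfl⟩
      · rcases hb with rfl | ⟨y, hy, rfl⟩
        · exact G.irrefl hab
        · exact hNW _ hab y.2
      · rcases hb with rfl | ⟨y, hy, rfl⟩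
        · exact hNW _ hab.symm x.2
        · exact hind x hx y hy hab
    calc _root_.indepNum (G.induce W) + 1 = (insert v (Subtype.val '' s)).ncard := hcard'.symm
      _ ≤ _root_.indepNum G := le_csSup (indep_bddAbove G)
          ⟨insert v (Subtype.val '' s), Set.toFinite _, rfl, hind'⟩
  -- edge count
  have hnotri : ∀ a b, G.Adj v a → G.Adj v b → ¬ G.Adj a b := by
    intro a b h1 h2 h12
    exact h3 {v, a, b} (is3Clique_triple_iff.2 ⟨h1, h2, h12⟩)
  have he : numEdges (G.induce W) + secondDeg G v ≤ numEdges G := by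
    set B : Set (V × V) := {p | p.1 ∈ G.neighborSet v ∧ p.2 ∈ G.neighborSet p.1} with hB
    have hd2 : secondDeg G v = B.ncard := by
      have h1 : secondDeg G v
          = ∑ w ∈ (G.neighborSet v).toFinset, (G.neighborSet w).toFinset.card := by
        have hfs := finsum_mem_coe_finset (deg G) (G.neighborSet v).toFinset
        rw [Set.coe_toFinset] at hfs
        rw [secondDeg, hfs]
        exact Finset.sum_congr rfl fun w _ => by rw [deg, Set.ncard_eq_toFinset_card']
      have h2 : B.toFinset = (G.neighborSet v).toFinset.biUnion
          (fun w => {w} ×ˢ (G.neighborSet w).toFinset) := by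
        ext ⟨a, b⟩
        simp only [Set.mem_toFinset, hB, Set.mem_setOf_eq, Finset.mem_biUnion,
          Finset.mem_product, Finset.mem_singleton]
        constructor
        · rintro ⟨h1, h2⟩; exact ⟨a, by simpa using h1, rfl, by simpa using h2⟩
        · rintro ⟨w, hw, rfl, h2⟩; exact ⟨by simpa using hw, by simpa using h2⟩
      rw [Set.ncard_eq_toFinset_card', h2, Finset.card_biUnion, h1]
      · exact Finset.sum_congr rfl fun w _ => by simp
      · intro x hx y hy hxy
        simp only [Finset.disjoint_left, Finset.mem_product, Finset.mem_singleton]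
        rintro ⟨a, b⟩ ⟨rfl, -⟩ ⟨rfl, -⟩
        exact hxy rfl
    rw [numEdges, numEdges, hd2]
    refine ncard_add_le (Sym2.map (Subtype.val : ↥W → V)) (fun p => s(p.1, p.2))
      ((Sym2.map.injective Subtype.val_injective).injOn) ?_ ?_ ?_ ?_
    · rintro ⟨a, b⟩ hab ⟨c, d⟩ hcd h
      obtain ⟨hab1, hab2⟩ := hab
      obtain ⟨hcd1, hcd2⟩ := hcd
      have hA1 : G.Adj v a := hab1
      have hA2 : G.Adj a b := hab2
      have hC1 : G.Adj v c := hcd1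
      simp only [Sym2.eq, Sym2.rel_iff', Prod.mk.injEq, Prod.swap_prod_mk] at h
      rcases h with ⟨h1', h2'⟩ | ⟨h1', h2'⟩
      · subst h1'; subst h2'; rfl
      · exact absurd hA2 (hnotri a b hA1 (by rw [h2']; exact hC1))
    · rintro e ⟨e', he', rfl⟩
      induction e' using Sym2.ind with
      | _ a b =>
        rw [Sym2.map_pair_eq, mem_edgeSet]
        exact (mem_edgeSet _).1 he'
    · rintro e ⟨⟨a, b⟩, ⟨h1, h2⟩, rfl⟩
      exact h2
    · rw [Set.disjoint_left]
      rintro e ⟨e', he', rfl⟩ ⟨⟨a, b⟩, ⟨h1, h2⟩, hab⟩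
      have hmem : a ∈ Sym2.map (Subtype.val : ↥W → V) e' := by
        rw [← hab]; exact Sym2.mem_mk_left a b
      rw [Sym2.mem_map] at hmem
      obtain ⟨x, -, rfl⟩ := hmem
      exact hNW _ h1 x.2
  -- C4 count
  have hc : numC4 (G.induce W) + numC4Through G (G.neighborSet v) ≤ numC4 G := by
    have key : {p : ↥W × ↥W × ↥W × ↥W | IsC4 (G.induce W) p}.ncard +
        {p : V × V × V × V | IsC4 G p ∧ (p.1 ∈ G.neighborSet v ∨ p.2.1 ∈ G.neighborSet v ∨
          p.2.2.1 ∈ G.neighborSet v ∨ p.2.2.2 ∈ G.neighborSet v)}.ncard ≤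
        {p : V × V × V × V | IsC4 G p}.ncard := by
      refine ncard_add_le
        (fun p : ↥W × ↥W × ↥W × ↥W => ((p.1 : V), (p.2.1 : V), (p.2.2.1 : V), (p.2.2.2 : V)))
        id ?_ (Set.injOn_id _) ?_ (by rw [Set.image_id]; exact fun p hp => hp.1) ?_
      · rintro ⟨a, b, c, d⟩ - ⟨a', b', c', d'⟩ - h
        simp only [Prod.mk.injEq, Subtype.coe_inj] at h
        obtain ⟨rfl, rfl, rfl, rfl⟩ := h
        rfl
      · rintro p ⟨⟨a, b, c, d⟩, hq, rfl⟩
        obtain ⟨q1, q2, q3, q4, q5, q6⟩ := hq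
        exact ⟨q1, q2, q3, q4, fun h => q5 (Subtype.ext h), fun h => q6 (Subtype.ext h)⟩
      · rw [Set.disjoint_left]
        rintro p hpA hpB
        obtain ⟨⟨a, b, c, d⟩, -, rfl⟩ := hpA
        rw [Set.image_id] at hpB
        obtain ⟨-, h⟩ := hpB
        rcases h with h | h | h | h
        · exact hNW _ h a.2
        · exact hNW _ h b.2
        · exact hNW _ h c.2
        · exact hNW _ h d.2
    rw [numC4, numC4, numC4Through]
    calc _ ≤ _ := nat_div_add_div_le _ _
      _ ≤ _ := Nat.div_le_div_right key
  simp only [nu]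
  omega
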